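/- For g ∈ X, define the linear operator A_g on X by A_g f = f + Σ_{k=1}^∞ (M^k f) ∗ g^{∗k} / k!. Then A_g is a bounded operator on X, with ‖A_g − I‖ ≤ exp(ρ‖M‖‖g‖_X) − 1; moreover, if ‖g‖_X ≤ (2ρ‖M‖)^{−1}, then A_g is boundedly invertible on X. -/

import Mathlib

open MeasureTheory Complex Real Filter Set

noncomputable section

/-- Lebesgue measure on the interval `(0, 1)`. -/
def mu01 : Measure ℝ := volume.restrict (Set.Ioo (0 : ℝ) 1)

/-- `convPow conv x k` is the `(k+1)`-fold convolution power `x^{∗(k+1)}`. -/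
def convPow {X : Type*} (conv : X → X → X) (x : X) : ℕ → X
  | 0 => x
  | k + 1 => conv x (convPow conv x k)

/-- The Γ-norm `‖γ‖_Γ = ‖a₀‖ + Σ_{k≥1} ‖a_k‖/(k-1)!` of a sequence `γ = (a_k)_{k≥0}`. -/
def gammaNorm {X : Type*} [NormedAddCommGroup X] (a : ℕ → X) : ℝ :=
  ‖a 0‖ + ∑' k : ℕ, ‖a (k + 1)‖ / (Nat.factorial k : ℝ)

/-- The nonlinear map
`G_γ(x) = Σ_{k≥1} (-1)^k x^{∗(2k+1)}/(2k+1)! - a₀ - Σ_{k≥1} a_k ∗ x^{∗k}/k!`. -/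
def Gmap {X : Type*} [NormedAddCommGroup X] [NormedSpace ℂ X]
    (conv : X → X → X) (a : ℕ → X) (x : X) : X :=
  (∑' k : ℕ, (((-1 : ℂ) ^ (k + 1)) / (Nat.factorial (2 * k + 3) : ℂ)) • convPow conv x (2 * k + 2))
    - a 0 - ∑' k : ℕ, ((Nat.factorial (k + 1) : ℂ))⁻¹ • conv (a (k + 1)) (convPow conv x k)

/-- **The operator `A_g`.** For `g ∈ X`, the operator `A_g f = f + Σ_{k≥1} (M^k f) ∗ g^{∗k}/k!`
is a bounded linear operator on `X` with `‖A_g - I‖ ≤ exp(ρ‖M‖‖g‖) - 1`; moreover, if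
`‖g‖ ≤ (2ρ‖M‖)⁻¹`, then `A_g` is boundedly invertible. -/
theorem Ag_bounded_and_invertible
    {X : Type*} [NormedAddCommGroup X] [NormedSpace ℂ X] [CompleteSpace X]
    -- `X` is continuously embedded in `L¹(0,1)`
    (ι : X →L[ℂ] Lp ℂ 1 mu01) (hι : Function.Injective ι)
    -- `X` is an algebra with respect to cyclic convolution
    (conv : X →ₗ[ℂ] X →ₗ[ℂ] X)
    (hconv : ∀ f g : X, (ι (conv f g) : ℝ → ℂ)
      =ᵐ[mu01] fun x => ∫ t, (ι f : ℝ → ℂ) (Int.fract (x - t)) * (ι g : ℝ → ℂ) t ∂mu01)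
    (ρ : ℝ) (hρ : 0 < ρ) (hbound : ∀ f g : X, ‖conv f g‖ ≤ ρ * ‖f‖ * ‖g‖)
    -- the operator `M` of multiplication by `i(2t-1)` is bounded on `X`
    (M : X →L[ℂ] X)
    (hM : ∀ f : X, (ι (M f) : ℝ → ℂ)
      =ᵐ[mu01] fun t => Complex.I * (2 * t - 1) * (ι f : ℝ → ℂ) t)
    (g : X) :
    ∃ A : X →L[ℂ] X,
      (∀ f : X, A f = f + ∑' k : ℕ,
        ((Nat.factorial (k + 1) : ℂ))⁻¹ •
          conv ((M ^ (k + 1)) f) (convPow (fun u v => conv u v) g k)) ∧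
      ‖A - 1‖ ≤ Real.exp (ρ * ‖M‖ * ‖g‖) - 1 ∧
      (‖g‖ ≤ (2 * ρ * ‖M‖)⁻¹ → IsUnit A) := by
  classical
  set C : ℝ := ρ * ‖M‖ * ‖g‖ with hC
  have hC0 : 0 ≤ C := by positivity
  set gp : ℕ → X := convPow (fun u v => conv u v) g with hgp
  have hgpnorm : ∀ k, ‖gp k‖ ≤ ρ ^ k * ‖g‖ ^ (k + 1) := by
    intro k
    induction k with
    | zero => simp [hgp, convPow]
    | succ k ih =>
      calc ‖gp (k + 1)‖ = ‖conv g (gp k)‖ := rfl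
        _ ≤ ρ * ‖g‖ * ‖gp k‖ := hbound _ _
        _ ≤ ρ * ‖g‖ * (ρ ^ k * ‖g‖ ^ (k + 1)) :=
            mul_le_mul_of_nonneg_left ih (by positivity)
        _ = ρ ^ (k + 1) * ‖g‖ ^ (k + 1 + 1) := by ring
  -- the k-th term of the series as a linear map
  have key : ∀ (k : ℕ) (f : X),
      ‖((Nat.factorial (k + 1) : ℂ))⁻¹ • conv ((M ^ (k + 1)) f) (gp k)‖
        ≤ (C ^ (k + 1) / (Nat.factorial (k + 1) : ℝ)) * ‖f‖ := by
    intro k f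
    have h1 : ‖conv ((M ^ (k + 1)) f) (gp k)‖ ≤ C ^ (k + 1) * ‖f‖ := by
      have hMf : ‖(M ^ (k + 1)) f‖ ≤ ‖M‖ ^ (k + 1) * ‖f‖ := by
        calc ‖(M ^ (k + 1)) f‖ ≤ ‖M ^ (k + 1)‖ * ‖f‖ := (M ^ (k + 1)).le_opNorm f
          _ ≤ ‖M‖ ^ (k + 1) * ‖f‖ :=
            mul_le_mul_of_nonneg_right (norm_pow_le' M k.succ_pos) (norm_nonneg f)
      calc ‖conv ((M ^ (k + 1)) f) (gp k)‖
          ≤ ρ * ‖(M ^ (k + 1)) f‖ * ‖gp k‖ := hbound _ _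
        _ ≤ ρ * (‖M‖ ^ (k + 1) * ‖f‖) * (ρ ^ k * ‖g‖ ^ (k + 1)) := by
            apply mul_le_mul
            · exact mul_le_mul_of_nonneg_left hMf (le_of_lt hρ)
            · exact hgpnorm k
            · exact norm_nonneg _
            · positivity
        _ = (ρ ^ (k + 1) * ‖M‖ ^ (k + 1) * ‖g‖ ^ (k + 1)) * ‖f‖ := by ring
        _ = C ^ (k + 1) * ‖f‖ := by rw [hC]; rw [mul_pow, mul_pow]
    have h2 : ‖((Nat.factorial (k + 1) : ℂ))⁻¹‖ = ((Nat.factorial (k + 1) : ℝ))⁻¹ := by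
      rw [norm_inv]
      norm_num
    rw [norm_smul, h2, div_eq_mul_inv]
    calc ((Nat.factorial (k + 1) : ℝ))⁻¹ * ‖conv ((M ^ (k + 1)) f) (gp k)‖
        ≤ ((Nat.factorial (k + 1) : ℝ))⁻¹ * (C ^ (k + 1) * ‖f‖) := by
          apply mul_le_mul_of_nonneg_left h1 (by positivity)
      _ = C ^ (k + 1) * ((Nat.factorial (k + 1) : ℝ))⁻¹ * ‖f‖ := by ring
  let Tlin : ℕ → X →ₗ[ℂ] X := fun k =>
    { toFun := fun f => ((Nat.factorial (k + 1) : ℂ))⁻¹ • conv ((M ^ (k + 1)) f) (gp k)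
      map_add' := fun u v => by simp [map_add, smul_add]
      map_smul' := fun c u => by
        simp [_root_.map_smul, smul_comm c] }
  let T : ℕ → X →L[ℂ] X := fun k =>
    LinearMap.mkContinuous (Tlin k) (C ^ (k + 1) / (Nat.factorial (k + 1) : ℝ)) (key k)
  have hTnorm : ∀ k, ‖T k‖ ≤ C ^ (k + 1) / (Nat.factorial (k + 1) : ℝ) := fun k =>
    LinearMap.mkContinuous_norm_le _ (by positivity) _
  have hgeo : Summable (fun k : ℕ => C ^ (k + 1) / (Nat.factorial (k + 1) : ℝ)) :=
    (Real.summable_pow_div_factorial C).comp_injective Nat.succ_injective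
  have hTs : Summable T :=
    Summable.of_norm_bounded hgeo hTnorm
  have hTns : Summable fun k => ‖T k‖ :=
    Summable.of_nonneg_of_le (fun k => norm_nonneg _) hTnorm hgeo
  refine ⟨1 + ∑' k, T k, ?_, ?_, ?_⟩
  · intro f
    have := (ContinuousLinearMap.apply ℂ X f).map_tsum hTs
    simp only [ContinuousLinearMap.apply_apply] at this
    simp only [ContinuousLinearMap.add_apply, ContinuousLinearMap.one_apply, this]
    rfl
  · have hA1 : (1 : X →L[ℂ] X) + (∑' k, T k) - 1 = ∑' k, T k := by
      abel
    rw [hA1]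
    calc ‖∑' k, T k‖ ≤ ∑' k, ‖T k‖ := norm_tsum_le_tsum_norm hTns
      _ ≤ ∑' k : ℕ, C ^ (k + 1) / (Nat.factorial (k + 1) : ℝ) :=
          hTns.tsum_le_tsum hTnorm hgeo
      _ = Real.exp C - 1 := by
          have hexp : Real.exp C = ∑' n : ℕ, C ^ n / (Nat.factorial n : ℝ) := by
            rw [Real.exp_eq_exp_ℝ, NormedSpace.exp_eq_tsum_div]
          rw [hexp, (Real.summable_pow_div_factorial C).tsum_eq_zero_add]
          simp
  · intro hg
    have hChalf : C ≤ 1 / 2 := by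
      rcases eq_or_lt_of_le (norm_nonneg M) with hM0 | hM0
      · rw [hC, ← hM0]
        nlinarith [norm_nonneg g]
      · have h2 : (0 : ℝ) < 2 * ρ * ‖M‖ := by positivity
        have : ρ * ‖M‖ * ‖g‖ ≤ ρ * ‖M‖ * (2 * ρ * ‖M‖)⁻¹ :=
          mul_le_mul_of_nonneg_left hg (by positivity)
        rw [hC]
        refine this.trans (le_of_eq ?_)
        field_simp
    have hlt : ‖(1 : X →L[ℂ] X) - (1 + ∑' k, T k)‖ < 1 := by
      have h1 : (1 : X →L[ℂ] X) - (1 + ∑' k, T k) = -(∑' k, T k) := by abel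
      rw [h1, norm_neg]
      have hb : ‖∑' k, T k‖ ≤ Real.exp C - 1 := by
        calc ‖∑' k, T k‖ ≤ ∑' k, ‖T k‖ := norm_tsum_le_tsum_norm hTns
          _ ≤ ∑' k : ℕ, C ^ (k + 1) / (Nat.factorial (k + 1) : ℝ) :=
              hTns.tsum_le_tsum hTnorm hgeo
          _ = Real.exp C - 1 := by
              have hexp : Real.exp C = ∑' n : ℕ, C ^ n / (Nat.factorial n : ℝ) := by
                rw [Real.exp_eq_exp_ℝ, NormedSpace.exp_eq_tsum_div]
              rw [hexp, (Real.summable_pow_div_factorial C).tsum_eq_zero_add]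
              simp
      have hexp2 : Real.exp C < 2 := by
        have hlog : (1 : ℝ) / 2 < Real.log 2 := by
          have := Real.log_two_gt_d9
          linarith
        calc Real.exp C ≤ Real.exp (1 / 2) := Real.exp_le_exp.mpr hChalf
          _ < Real.exp (Real.log 2) := Real.exp_lt_exp.mpr hlog
          _ = 2 := Real.exp_log (by norm_num)
      linarith
    have hu : IsUnit ((1 : X →L[ℂ] X) - ((1 : X →L[ℂ] X) - (1 + ∑' k, T k))) :=
      (Units.oneSub _ hlt).isUnit
    have heq : (1 : X →L[ℂ] X) - ((1 : X →L[ℂ] X) - (1 + ∑' k, T k)) = 1 + ∑' k, T k := by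
      abel
    rwa [heq] at hu
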